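/- arXiv:1805.06302 — 2 statements merged into one kernel-verified Lean document; each statement's English description precedes it below -/
import Mathlib

section
/- Every labeled graph belonging to the class 𝒢 has trivial associated group G(Γ). -/
namespace Stratifold

/-- A **labeled graph**: a finite bipartite multigraph whose vertices (named by natural
numbers) are partitioned into black and white vertices, every edge (also named by a
natural number) joining a black vertex to a white vertex and carrying a positive integer
label, and every white vertex carrying an integer genus. -/
structure LGraph where
  blacks : Finset ℕ
  whites : Finset ℕ
  edges : Finset ℕ
  bEnd : ℕ → ℕ
  wEnd : ℕ → ℕ
  label : ℕ → ℕ
  genus : ℕ → ℤ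
  disj : Disjoint blacks whites
  bEnd_mem : ∀ e ∈ edges, bEnd e ∈ blacks
  wEnd_mem : ∀ e ∈ edges, wEnd e ∈ whites
  label_pos : ∀ e ∈ edges, 0 < label e

namespace LGraph

/-- The set of all vertices of a labeled graph. -/
def Verts (G : LGraph) : Finset ℕ := G.blacks ∪ G.whites

/-- The edges incident to a vertex. -/
def IncidentEdges (G : LGraph) (v : ℕ) : Finset ℕ :=
  G.edges.filter fun e => G.bEnd e = v ∨ G.wEnd e = v

/-- The degree of a vertex. -/
def deg (G : LGraph) (v : ℕ) : ℕ := (G.IncidentEdges v).card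

/-- Adjacency: two vertices joined by some edge. -/
def Adj (G : LGraph) (u v : ℕ) : Prop :=
  ∃ e ∈ G.edges, (G.bEnd e = u ∧ G.wEnd e = v) ∨ (G.bEnd e = v ∧ G.wEnd e = u)

/-- Reachability by a path of edges. -/
def Reach (G : LGraph) : ℕ → ℕ → Prop := Relation.ReflTransGen G.Adj

/-- The graph is connected (and nonempty). -/
def Connected (G : LGraph) : Prop :=
  G.Verts.Nonempty ∧ ∀ u ∈ G.Verts, ∀ v ∈ G.Verts, G.Reach u v

/-- A (multi)graph is a tree iff it is connected and has exactly one more vertex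
than it has edges. -/
def IsTree (G : LGraph) : Prop := G.Connected ∧ G.edges.card + 1 = G.Verts.card

/-- Trivalent: for every black vertex, the labels of its incident edges sum to `3`. -/
def Trivalent (G : LGraph) : Prop :=
  ∀ b ∈ G.blacks, ∑ e ∈ G.IncidentEdges b, G.label e = 3

/-- All white vertices have genus `0`. -/
def WhitesGenusZero (G : LGraph) : Prop := ∀ w ∈ G.whites, G.genus w = 0

/-- All terminal (degree-one) vertices are white. -/
def TerminalsWhite (G : LGraph) : Prop := ∀ v ∈ G.blacks, G.deg v ≠ 1

/-- The relator associated to a white vertex `w`: the product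
`b(e₁)^{r(e₁)} ⋯ b(eₚ)^{r(eₚ)}` over the edges `e₁ < ⋯ < eₚ` incident to `w`
(in the chosen linear order of the edge names), where `b(e)` is the black endpoint
of `e` and `r(e)` its label. -/
def relator (G : LGraph) (w : ℕ) : FreeGroup {b : ℕ // b ∈ G.blacks} :=
  (((G.edges.filter fun e => G.wEnd e = w).sort (· ≤ ·)).map fun e =>
    if h : G.bEnd e ∈ G.blacks then
      FreeGroup.of (⟨G.bEnd e, h⟩ : {b : ℕ // b ∈ G.blacks}) ^ G.label e
    else 1).prod

/-- The set of relators of `G`: one for each white vertex. -/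
def rels (G : LGraph) : Set (FreeGroup {b : ℕ // b ∈ G.blacks}) :=
  {r | ∃ w ∈ G.whites, r = G.relator w}

/-- The group associated to a labeled graph which is a tree with all white vertices of
genus 0: one generator for each black vertex, one relation for each white vertex. -/
abbrev Grp (G : LGraph) : Type := PresentedGroup G.rels

/-- The generator of `Grp G` corresponding to a black vertex `b`. -/
def gen (G : LGraph) (b : ℕ) (h : b ∈ G.blacks) : G.Grp := PresentedGroup.of ⟨b, h⟩

/-- `G` is the labeled graph consisting of a single white vertex `w` of genus `0`. -/
def IsSingleWhite (G : LGraph) (w : ℕ) : Prop :=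
  G.whites = {w} ∧ G.blacks = ∅ ∧ G.edges = ∅ ∧ G.genus w = 0

/-- `G` is a `b111`-tree: one black vertex joined by three edges of label `1` to three
white vertices of genus `0`. -/
def IsB111 (G : LGraph) : Prop :=
  ∃ b w₁ w₂ w₃ e₁ e₂ e₃ : ℕ,
    G.blacks = {b} ∧ G.whites = {w₁, w₂, w₃} ∧
    w₁ ≠ w₂ ∧ w₁ ≠ w₃ ∧ w₂ ≠ w₃ ∧
    G.edges = {e₁, e₂, e₃} ∧ e₁ ≠ e₂ ∧ e₁ ≠ e₃ ∧ e₂ ≠ e₃ ∧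
    G.bEnd e₁ = b ∧ G.bEnd e₂ = b ∧ G.bEnd e₃ = b ∧
    G.wEnd e₁ = w₁ ∧ G.wEnd e₂ = w₂ ∧ G.wEnd e₃ = w₃ ∧
    G.label e₁ = 1 ∧ G.label e₂ = 1 ∧ G.label e₃ = 1 ∧
    G.genus w₁ = 0 ∧ G.genus w₂ = 0 ∧ G.genus w₃ = 0

/-- Operation `O1` performed at the white vertex `w` of `G`, producing `G'`:
the edges incident to `w` are split into two (possibly empty) sets `E₀` and its
complement; `w` is replaced by two white vertices `w₀`, `w₁` of genus `0` (the edges of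
`E₀` reattached to `w₀`, the others to `w₁`); a new black vertex `b` and a new terminal
white vertex `w₂` of genus `0` are added, together with three new edges of label `1`
joining `b` to `w₀`, to `w₁` and to `w₂`. -/
def O1At (G G' : LGraph) (w : ℕ) : Prop :=
  w ∈ G.whites ∧
  ∃ (E₀ : Finset ℕ) (w₀ w₁ w₂ b f₀ f₁ f₂ : ℕ),
    E₀ ⊆ G.edges.filter (fun e => G.wEnd e = w) ∧
    w₀ ∉ G.Verts ∧ w₁ ∉ G.Verts ∧ w₂ ∉ G.Verts ∧ b ∉ G.Verts ∧
    w₀ ≠ w₁ ∧ w₀ ≠ w₂ ∧ w₁ ≠ w₂ ∧ b ≠ w₀ ∧ b ≠ w₁ ∧ b ≠ w₂ ∧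
    f₀ ∉ G.edges ∧ f₁ ∉ G.edges ∧ f₂ ∉ G.edges ∧ f₀ ≠ f₁ ∧ f₀ ≠ f₂ ∧ f₁ ≠ f₂ ∧
    G'.blacks = insert b G.blacks ∧
    G'.whites = insert w₀ (insert w₁ (insert w₂ (G.whites.erase w))) ∧
    G'.edges = insert f₀ (insert f₁ (insert f₂ G.edges)) ∧
    (∀ e ∈ G.edges, G'.bEnd e = G.bEnd e ∧ G'.label e = G.label e) ∧
    (∀ e ∈ G.edges, G'.wEnd e =
      if G.wEnd e = w then (if e ∈ E₀ then w₀ else w₁) else G.wEnd e) ∧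
    G'.bEnd f₀ = b ∧ G'.bEnd f₁ = b ∧ G'.bEnd f₂ = b ∧
    G'.wEnd f₀ = w₀ ∧ G'.wEnd f₁ = w₁ ∧ G'.wEnd f₂ = w₂ ∧
    G'.label f₀ = 1 ∧ G'.label f₁ = 1 ∧ G'.label f₂ = 1 ∧
    (∀ v ∈ G.whites.erase w, G'.genus v = G.genus v) ∧
    G'.genus w₀ = 0 ∧ G'.genus w₁ = 0 ∧ G'.genus w₂ = 0

/-- Operation `O1` performed at some white vertex. -/
def O1Step (G G' : LGraph) : Prop := ∃ w, O1At G G' w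

/-- Operation `O2` performed at the white vertex `w` of `G`, producing `G'`: a new black
vertex `b` and a new terminal white vertex `w'` of genus `0` are added, together with an
edge of label `2` joining `w` to `b` and an edge of label `1` joining `b` to `w'`. -/
def O2At (G G' : LGraph) (w : ℕ) : Prop :=
  w ∈ G.whites ∧
  ∃ (b w' f₁ f₂ : ℕ),
    b ∉ G.Verts ∧ w' ∉ G.Verts ∧ b ≠ w' ∧
    f₁ ∉ G.edges ∧ f₂ ∉ G.edges ∧ f₁ ≠ f₂ ∧
    G'.blacks = insert b G.blacks ∧
    G'.whites = insert w' G.whites ∧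
    G'.edges = insert f₁ (insert f₂ G.edges) ∧
    (∀ e ∈ G.edges, G'.bEnd e = G.bEnd e ∧ G'.wEnd e = G.wEnd e ∧ G'.label e = G.label e) ∧
    G'.bEnd f₁ = b ∧ G'.wEnd f₁ = w ∧ G'.label f₁ = 2 ∧
    G'.bEnd f₂ = b ∧ G'.wEnd f₂ = w' ∧ G'.label f₂ = 1 ∧
    (∀ v ∈ G.whites, G'.genus v = G.genus v) ∧
    G'.genus w' = 0

/-- Operation `O2` performed at some white vertex. -/
def O2Step (G G' : LGraph) : Prop := ∃ w, O2At G G' w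

/-- Two labeled graphs are disjoint: no common vertices and no common edges. -/
def DisjGraphs (G₁ G₂ : LGraph) : Prop :=
  Disjoint G₁.Verts G₂.Verts ∧ Disjoint G₁.edges G₂.edges

/-- Operation `O1*` on disjoint labeled graphs `G₁`, `G₂` with chosen white vertices
`w₁ ∈ G₁`, `w₂ ∈ G₂`, producing `G'`: a new black vertex `b` and a new terminal white
vertex `w` of genus `0` are added, together with three new edges of label `1` joining
`b` to `w₁`, to `w₂` and to `w`. -/
def O1StarAt (G₁ G₂ G' : LGraph) (w₁ w₂ : ℕ) : Prop :=
  DisjGraphs G₁ G₂ ∧ w₁ ∈ G₁.whites ∧ w₂ ∈ G₂.whites ∧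
  ∃ (b w f₀ f₁ f₂ : ℕ),
    b ∉ G₁.Verts ∪ G₂.Verts ∧ w ∉ G₁.Verts ∪ G₂.Verts ∧ b ≠ w ∧
    f₀ ∉ G₁.edges ∪ G₂.edges ∧ f₁ ∉ G₁.edges ∪ G₂.edges ∧ f₂ ∉ G₁.edges ∪ G₂.edges ∧
    f₀ ≠ f₁ ∧ f₀ ≠ f₂ ∧ f₁ ≠ f₂ ∧
    G'.blacks = insert b (G₁.blacks ∪ G₂.blacks) ∧
    G'.whites = insert w (G₁.whites ∪ G₂.whites) ∧
    G'.edges = insert f₀ (insert f₁ (insert f₂ (G₁.edges ∪ G₂.edges))) ∧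
    (∀ e ∈ G₁.edges, G'.bEnd e = G₁.bEnd e ∧ G'.wEnd e = G₁.wEnd e ∧ G'.label e = G₁.label e) ∧
    (∀ e ∈ G₂.edges, G'.bEnd e = G₂.bEnd e ∧ G'.wEnd e = G₂.wEnd e ∧ G'.label e = G₂.label e) ∧
    G'.bEnd f₀ = b ∧ G'.wEnd f₀ = w₁ ∧ G'.label f₀ = 1 ∧
    G'.bEnd f₁ = b ∧ G'.wEnd f₁ = w₂ ∧ G'.label f₁ = 1 ∧
    G'.bEnd f₂ = b ∧ G'.wEnd f₂ = w ∧ G'.label f₂ = 1 ∧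
    (∀ v ∈ G₁.whites, G'.genus v = G₁.genus v) ∧
    (∀ v ∈ G₂.whites, G'.genus v = G₂.genus v) ∧
    G'.genus w = 0

end LGraph

open LGraph

/-- `𝒢`: the smallest class of labeled graphs containing the graph consisting of a single
white vertex of genus `0` and closed under operations `O1`, `O2` (at any white vertex of
a member) and `O1*` (joining any two disjoint members at any white vertices). -/
inductive InG : LGraph → Prop
  | single (G : LGraph) (w : ℕ) : IsSingleWhite G w → InG G
  | o1 (G G' : LGraph) (w : ℕ) : InG G → O1At G G' w → InG G'
  | o2 (G G' : LGraph) (w : ℕ) : InG G → O2At G G' w → InG G'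
  | o1star (G₁ G₂ G' : LGraph) (w₁ w₂ : ℕ) :
      InG G₁ → InG G₂ → O1StarAt G₁ G₂ G' w₁ w₂ → InG G'

namespace LGraph

/-- The induced labeled subgraph on a set `S` of vertices. -/
def induce (G : LGraph) (S : Finset ℕ) : LGraph where
  blacks := G.blacks ∩ S
  whites := G.whites ∩ S
  edges := G.edges.filter fun e => G.bEnd e ∈ S ∧ G.wEnd e ∈ S
  bEnd := G.bEnd
  wEnd := G.wEnd
  label := G.label
  genus := G.genus
  disj := G.disj.mono Finset.inter_subset_left Finset.inter_subset_left
  bEnd_mem := fun e he => by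
    rw [Finset.mem_filter] at he
    exact Finset.mem_inter.2 ⟨G.bEnd_mem e he.1, he.2.1⟩
  wEnd_mem := fun e he => by
    rw [Finset.mem_filter] at he
    exact Finset.mem_inter.2 ⟨G.wEnd_mem e he.1, he.2.2⟩
  label_pos := fun e he => G.label_pos e (Finset.mem_filter.1 he).1

/-- `B`: the set of black vertices of degree `3`. -/
def bigB (G : LGraph) : Finset ℕ := G.blacks.filter fun b => G.deg b = 3

/-- `Γ − st(B)`: the graph obtained by removing the black vertices of degree `3`
together with all edges incident to them. -/
def minusStB (G : LGraph) : LGraph := G.induce (G.Verts \ G.bigB)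

/-- `St(B)`: the closed star of the set `B` of black vertices of degree `3`, i.e. the
vertices of `B`, the edges incident to them, and the white endpoints of those edges. -/
def closedStar (G : LGraph) : LGraph where
  blacks := G.bigB
  whites := G.whites.filter fun w => ∃ e ∈ G.edges, G.bEnd e ∈ G.bigB ∧ G.wEnd e = w
  edges := G.edges.filter fun e => G.bEnd e ∈ G.bigB
  bEnd := G.bEnd
  wEnd := G.wEnd
  label := G.label
  genus := G.genus
  disj := G.disj.mono (Finset.filter_subset _ _) (Finset.filter_subset _ _)
  bEnd_mem := fun e he => (Finset.mem_filter.1 he).2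
  wEnd_mem := fun e he => by
    rw [Finset.mem_filter] at he
    exact Finset.mem_filter.2
      ⟨G.wEnd_mem e he.1, ⟨e, he.1, he.2, rfl⟩⟩
  label_pos := fun e he => G.label_pos e (Finset.mem_filter.1 he).1

open Classical in
/-- The connected component of a vertex `v` in `G`, as a labeled graph. -/
noncomputable def component (G : LGraph) (v : ℕ) : LGraph :=
  G.induce (G.Verts.filter fun u => G.Reach u v)

/-- `C` is a `(2,1)`-collapsible tree with root `r`: it is obtained from the labeled
graph consisting of the single white vertex `r` of genus `0` by repeatedly attaching,
at a white vertex `u`, a new black vertex `b` joined to `u` by an edge of label `2` and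
to a new terminal white vertex by an edge of label `1` (i.e. by repeatedly performing
operation `O2`).  This is exactly the barycentric subdivision of a tree rooted at `r`,
with barycenters colored black, an edge labeled `2` precisely when its distance to the
root is even, and `1` when it is odd. -/
def IsCollapsible (C : LGraph) (r : ℕ) : Prop :=
  ∃ C₀ : LGraph, IsSingleWhite C₀ r ∧ Relation.ReflTransGen O2Step C₀ C

open Classical in
/-- The white vertices of `St(B)` that are not the root of the `(2,1)`-collapsible
component of `Γ − st(B)` containing them. -/
noncomputable def notRootWhites (G : LGraph) : Finset ℕ :=
  G.closedStar.whites.filter fun w => ¬ IsCollapsible ((G.minusStB).component w) w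

/-- `R` is the reduced graph `R(G)`: it is obtained from the closed star `St(B)` by
attaching to each white vertex `w` of `St(B)` that is not a root a `b12`-tree, i.e. a
new black vertex joined to `w` by an edge of label `1` and to a new terminal white
vertex of genus `0` by an edge of label `2`. -/
def IsReduced (G R : LGraph) : Prop :=
  ∃ nb nw ne₁ ne₂ : ℕ → ℕ,
    (∀ w ∈ G.notRootWhites,
      nb w ∉ G.Verts ∧ nw w ∉ G.Verts ∧ nb w ≠ nw w ∧
      ne₁ w ∉ G.edges ∧ ne₂ w ∉ G.edges ∧ ne₁ w ≠ ne₂ w) ∧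
    (∀ w ∈ G.notRootWhites, ∀ w' ∈ G.notRootWhites, w ≠ w' →
      nb w ≠ nb w' ∧ nb w ≠ nw w' ∧ nw w ≠ nw w' ∧
      ne₁ w ≠ ne₁ w' ∧ ne₁ w ≠ ne₂ w' ∧ ne₂ w ≠ ne₂ w') ∧
    R.blacks = G.closedStar.blacks ∪ G.notRootWhites.image nb ∧
    R.whites = G.closedStar.whites ∪ G.notRootWhites.image nw ∧
    R.edges = G.closedStar.edges ∪ G.notRootWhites.image ne₁ ∪ G.notRootWhites.image ne₂ ∧
    (∀ e ∈ G.closedStar.edges, R.bEnd e = G.bEnd e ∧ R.wEnd e = G.wEnd e ∧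
      R.label e = G.label e) ∧
    (∀ w ∈ G.closedStar.whites, R.genus w = G.genus w) ∧
    (∀ w ∈ G.notRootWhites,
      R.bEnd (ne₁ w) = nb w ∧ R.wEnd (ne₁ w) = w ∧ R.label (ne₁ w) = 1 ∧
      R.bEnd (ne₂ w) = nb w ∧ R.wEnd (ne₂ w) = nw w ∧ R.label (ne₂ w) = 2 ∧
      R.genus (nw w) = 0)

/-- `H` is a horned tree: the bicolored labeled tree obtained from a tree `T` with at
least two edges, all of whose nonterminal vertices have degree `3`, by coloring
degree-1 vertices white (genus `0`) and degree-3 vertices black, trisecting terminal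
edges and bisecting nonterminal edges (coloring the new vertices black exactly when
they neighbor a terminal vertex), and labeling terminal edges `2` and all other edges
`1`.  Equivalently (intrinsically): `H` is a tree with all whites of genus `0`; at
least one black vertex has degree `3`; every terminal vertex is white and its edge has
label `2`; every nonterminal white vertex has degree `2` with both incident labels `1`;
and every black vertex either has degree `3` with all incident labels `1`, or has
degree `2` with one incident edge of label `2` leading to a terminal white vertex and
the other of label `1`. -/
def IsHornedTree (H : LGraph) : Prop :=
  H.IsTree ∧ H.WhitesGenusZero ∧
  (∃ b ∈ H.blacks, H.deg b = 3) ∧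
  H.TerminalsWhite ∧
  (∀ w ∈ H.whites, H.deg w = 1 → ∀ e ∈ H.IncidentEdges w, H.label e = 2) ∧
  (∀ w ∈ H.whites, H.deg w ≠ 1 → H.deg w = 2 ∧ ∀ e ∈ H.IncidentEdges w, H.label e = 1) ∧
  (∀ b ∈ H.blacks,
    (H.deg b = 3 ∧ ∀ e ∈ H.IncidentEdges b, H.label e = 1) ∨
    (H.deg b = 2 ∧ ∃ e₁ ∈ H.IncidentEdges b, ∃ e₂ ∈ H.IncidentEdges b, e₁ ≠ e₂ ∧
      H.label e₁ = 2 ∧ H.label e₂ = 1 ∧ H.deg (H.wEnd e₁) = 1))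

/-- `H` is a (labeled bipartite) subgraph of `G`. -/
def IsSubgraph (H G : LGraph) : Prop :=
  H.blacks ⊆ G.blacks ∧ H.whites ⊆ G.whites ∧ H.edges ⊆ G.edges ∧
  (∀ e ∈ H.edges, H.bEnd e = G.bEnd e ∧ H.wEnd e = G.wEnd e ∧ H.label e = G.label e) ∧
  ∀ w ∈ H.whites, H.genus w = G.genus w

end LGraph

end Stratifold


namespace Stratifold
namespace LGraph

/-- Relator along an arbitrary list of edges. -/
def relatorL (G : LGraph) (L : List ℕ) : FreeGroup {b : ℕ // b ∈ G.blacks} :=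
  (L.map fun e =>
    if h : G.bEnd e ∈ G.blacks then
      FreeGroup.of (⟨G.bEnd e, h⟩ : {b : ℕ // b ∈ G.blacks}) ^ G.label e
    else 1).prod

def relsL (G : LGraph) (ord : ℕ → List ℕ) : Set (FreeGroup {b : ℕ // b ∈ G.blacks}) :=
  {r | ∃ w ∈ G.whites, r = G.relatorL (ord w)}

def Enum (G : LGraph) (ord : ℕ → List ℕ) : Prop :=
  ∀ w ∈ G.whites, ((ord w : Multiset ℕ)) = (G.edges.filter fun e => G.wEnd e = w).val

lemma enum_sort (G : LGraph) :
    G.Enum (fun w => (G.edges.filter fun e => G.wEnd e = w).sort (· ≤ ·)) :=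
  fun _ _ => Finset.sort_eq _ _

lemma Enum.mem {G : LGraph} {ord : ℕ → List ℕ} (h : G.Enum ord) {v : ℕ}
    (hv : v ∈ G.whites) {e : ℕ} :
    e ∈ ord v ↔ e ∈ G.edges ∧ G.wEnd e = v := by
  rw [← Multiset.mem_coe, h v hv, Finset.mem_val, Finset.mem_filter]

lemma Enum.nodup {G : LGraph} {ord : ℕ → List ℕ} (h : G.Enum ord) {v : ℕ}
    (hv : v ∈ G.whites) : (ord v).Nodup := by
  rw [← Multiset.coe_nodup, h v hv]; exact Finset.nodup _

lemma enum_of_mem {G : LGraph} {ord : ℕ → List ℕ}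
    (hnd : ∀ v ∈ G.whites, (ord v).Nodup)
    (hm : ∀ v ∈ G.whites, ∀ e, e ∈ ord v ↔ e ∈ G.edges ∧ G.wEnd e = v) :
    G.Enum ord := by
  intro v hv
  rw [Multiset.Nodup.ext (Multiset.coe_nodup.2 (hnd v hv)) (Finset.nodup _)]
  intro e
  rw [Multiset.mem_coe, Finset.mem_val, Finset.mem_filter]
  exact hm v hv e

lemma prod_map_erase_one {M : Type*} [Monoid M] (g : ℕ → M) (a : ℕ) (hg : g a = 1) :
    ∀ L : List ℕ, ((L.erase a).map g).prod = (L.map g).prod := by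
  intro L
  induction L with
  | nil => simp
  | cons x L ih =>
    by_cases hx : x = a
    · subst hx; simp [List.erase_cons_head, hg]
    · rw [List.erase_cons_tail (by simp [hx])]
      simp [ih]

lemma presented_eq_one {α : Type*} {rels : Set (FreeGroup α)}
    (h : ∀ a : α, (PresentedGroup.of a : PresentedGroup rels) = 1) :
    ∀ x : PresentedGroup rels, x = 1 := by
  intro x
  induction x using QuotientGroup.induction_on with
  | _ z =>
    induction z using FreeGroup.induction_on with
    | C1 => exact map_one (QuotientGroup.mk' (Subgroup.normalClosure rels))
    | of x => exact h x
    | inv_of x hx => rw [QuotientGroup.mk_inv, hx]; exact inv_one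
    | mul x y hx hy => rw [QuotientGroup.mk_mul, hx, hy]; exact one_mul _

lemma mk_relatorL_eq_one {G : LGraph} {ord : ℕ → List ℕ} {w : ℕ} (hw : w ∈ G.whites) :
    (QuotientGroup.mk (G.relatorL (ord w)) : PresentedGroup (G.relsL ord)) = 1 :=
  (QuotientGroup.eq_one_iff _).2 (Subgroup.subset_normalClosure ⟨w, hw, rfl⟩)

lemma hom_relatorL {G : LGraph} {H : Type*} [Group H]
    (φ : FreeGroup {b : ℕ // b ∈ G.blacks} →* H) (L : List ℕ) :
    φ (G.relatorL L) =
      (L.map fun e =>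
        if h : G.bEnd e ∈ G.blacks then φ (FreeGroup.of ⟨G.bEnd e, h⟩) ^ G.label e
        else 1).prod := by
  rw [relatorL, map_list_prod, List.map_map]
  refine congrArg List.prod (List.map_congr_left fun e _ => ?_)
  by_cases h : G.bEnd e ∈ G.blacks <;> simp [h]

/-- The image in the presented group of the `dite` factor associated to an edge. -/
def gterm (G : LGraph) (ord : ℕ → List ℕ) (e : ℕ) : PresentedGroup (G.relsL ord) :=
  if h : G.bEnd e ∈ G.blacks then (PresentedGroup.of ⟨G.bEnd e, h⟩) ^ G.label e else 1

lemma gterm_prod (G : LGraph) (ord : ℕ → List ℕ) {v : ℕ} (hv : v ∈ G.whites) :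
    ((ord v).map (G.gterm ord)).prod = 1 :=
  (hom_relatorL (QuotientGroup.mk' (Subgroup.normalClosure (G.relsL ord)))
    (ord v)).symm.trans (mk_relatorL_eq_one hv)

lemma gterm_eq' (G : LGraph) (ord : ℕ → List ℕ) {e b : ℕ} (hb : G.bEnd e = b)
    (hmem : b ∈ G.blacks) :
    G.gterm ord e = (PresentedGroup.of ⟨b, hmem⟩) ^ G.label e := by
  subst hb; exact dif_pos hmem

lemma lift_term_eq {G : LGraph} {H : Type*} [Group H] (f : {b : ℕ // b ∈ G.blacks} → H)
    {e b : ℕ} (hb : G.bEnd e = b) (hmem : b ∈ G.blacks) :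
    (if h : G.bEnd e ∈ G.blacks then
        (FreeGroup.lift f) (FreeGroup.of ⟨G.bEnd e, h⟩) ^ G.label e else 1) =
      f ⟨b, hmem⟩ ^ G.label e := by
  subst hb; rw [dif_pos hmem, FreeGroup.lift_apply_of]

end LGraph
end Stratifold

open Stratifold Stratifold.LGraph

theorem key (Γ : Stratifold.LGraph) (h : Stratifold.InG Γ) :
    ∀ ord : ℕ → List ℕ, Γ.Enum ord → ∀ x : PresentedGroup (Γ.relsL ord), x = 1 := by
  induction h with
  | single G w hs =>
    intro ord hord
    refine presented_eq_one ?_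
    rintro ⟨a, ha⟩
    rw [hs.2.1] at ha
    exact absurd ha (Finset.notMem_empty a)
  | o1 G G' w hG hop ih =>
    intro ord hord
    obtain ⟨hw, E₀, w₀, w₁, w₂, b, f₀, f₁, f₂, hE₀, hw₀V, hw₁V, hw₂V, hbV,
      hw₀w₁, hw₀w₂, hw₁w₂, hbw₀, hbw₁, hbw₂, hf₀E, hf₁E, hf₂E, hf₀₁, hf₀₂, hf₁₂,
      hB, hW, hE, holdB, holdW, hbf₀, hbf₁, hbf₂, hwf₀, hwf₁, hwf₂,
      hlf₀, hlf₁, hlf₂, hgold, hg₀, hg₁, hg₂⟩ := hop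
    have hWmem : ∀ {v}, v ∈ G.whites → v ∈ G.Verts := fun hv => Finset.mem_union_right _ hv
    have hbmem' : b ∈ G'.blacks := by rw [hB]; exact Finset.mem_insert_self _ _
    have hw₀mem' : w₀ ∈ G'.whites := by rw [hW]; exact Finset.mem_insert_self _ _
    have hw₁mem' : w₁ ∈ G'.whites := by
      rw [hW]; exact Finset.mem_insert_of_mem (Finset.mem_insert_self _ _)
    have hw₂mem' : w₂ ∈ G'.whites := by
      rw [hW]
      exact Finset.mem_insert_of_mem (Finset.mem_insert_of_mem (Finset.mem_insert_self _ _))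
    have hvmem' : ∀ {v}, v ∈ G.whites → v ≠ w → v ∈ G'.whites := fun hv hvw => by
      rw [hW]
      exact Finset.mem_insert_of_mem (Finset.mem_insert_of_mem
        (Finset.mem_insert_of_mem (Finset.mem_erase.2 ⟨hvw, hv⟩)))
    have hedge' : ∀ {e}, e ∈ G'.edges ↔ e = f₀ ∨ e = f₁ ∨ e = f₂ ∨ e ∈ G.edges :=
      fun {e} => by rw [hE]; simp
    have hwend₀ : ∀ e ∈ G.edges, (G'.wEnd e = w₀ ↔ G.wEnd e = w ∧ e ∈ E₀) := by
      intro e he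
      rw [holdW e he]
      by_cases h1 : G.wEnd e = w
      · rw [if_pos h1]
        by_cases h2 : e ∈ E₀
        · rw [if_pos h2]; exact ⟨fun _ => ⟨h1, h2⟩, fun _ => rfl⟩
        · rw [if_neg h2]; exact ⟨fun h => absurd h.symm hw₀w₁, fun h => absurd h.2 h2⟩
      · rw [if_neg h1]
        exact ⟨fun h => absurd (hWmem (h ▸ G.wEnd_mem e he)) hw₀V,
          fun h => absurd h.1 h1⟩
    have hwend₁ : ∀ e ∈ G.edges, (G'.wEnd e = w₁ ↔ G.wEnd e = w ∧ e ∉ E₀) := by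
      intro e he
      rw [holdW e he]
      by_cases h1 : G.wEnd e = w
      · rw [if_pos h1]
        by_cases h2 : e ∈ E₀
        · rw [if_pos h2]; exact ⟨fun h => absurd h hw₀w₁, fun h => absurd h2 h.2⟩
        · rw [if_neg h2]; exact ⟨fun _ => ⟨h1, h2⟩, fun _ => rfl⟩
      · rw [if_neg h1]
        exact ⟨fun h => absurd (hWmem (h ▸ G.wEnd_mem e he)) hw₁V,
          fun h => absurd h.1 h1⟩
    have hwendv : ∀ {v}, v ∈ G.whites → v ≠ w → ∀ e ∈ G.edges,
        (G'.wEnd e = v ↔ G.wEnd e = v) := by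
      intro v hv hvw e he
      rw [holdW e he]
      by_cases h1 : G.wEnd e = w
      · rw [if_pos h1]
        constructor
        · intro h
          exfalso
          refine absurd (hWmem hv) ?_
          rw [← h]
          by_cases h2 : e ∈ E₀
          · rw [if_pos h2]; exact hw₀V
          · rw [if_neg h2]; exact hw₁V
        · intro h; exact absurd (h.symm.trans h1) hvw
      · rw [if_neg h1]
    have hwend₂ : ∀ e ∈ G.edges, G'.wEnd e ≠ w₂ := by
      intro e he h
      rw [holdW e he] at h
      by_cases h1 : G.wEnd e = w
      · rw [if_pos h1] at h
        by_cases h2 : e ∈ E₀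
        · rw [if_pos h2] at h; exact hw₀w₂ h
        · rw [if_neg h2] at h; exact hw₁w₂ h
      · rw [if_neg h1] at h; exact hw₂V (hWmem (h ▸ G.wEnd_mem e he))
    have hw₂list : ord w₂ = [f₂] := by
      refine Multiset.coe_eq_singleton.1 ?_
      rw [Multiset.Nodup.ext (Multiset.coe_nodup.2 (hord.nodup hw₂mem'))
        (Multiset.nodup_singleton f₂)]
      intro e
      rw [Multiset.mem_coe, hord.mem hw₂mem', Multiset.mem_singleton]
      constructor
      · rintro ⟨heE, heW⟩
        rcases hedge'.1 heE with rfl | rfl | rfl | he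
        · rw [hwf₀] at heW; exact absurd heW hw₀w₂
        · rw [hwf₁] at heW; exact absurd heW hw₁w₂
        · rfl
        · exact absurd heW (hwend₂ e he)
      · rintro rfl
        exact ⟨hedge'.2 (Or.inr (Or.inr (Or.inl rfl))), hwf₂⟩
    have hofb : (PresentedGroup.of ⟨b, hbmem'⟩ : PresentedGroup (G'.relsL ord)) = 1 := by
      have h1 := gterm_prod G' ord hw₂mem'
      rw [hw₂list, List.map_cons, List.map_nil, List.prod_cons, List.prod_nil, mul_one,
        gterm_eq' G' ord hbf₂ hbmem', hlf₂, pow_one] at h1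
      exact h1
    have hgf₀ : G'.gterm ord f₀ = 1 := by
      rw [gterm_eq' G' ord hbf₀ hbmem', hlf₀, hofb, one_pow]
    have hgf₁ : G'.gterm ord f₁ = 1 := by
      rw [gterm_eq' G' ord hbf₁ hbmem', hlf₁, hofb, one_pow]
    refine presented_eq_one ?_
    rintro ⟨a, ha⟩
    rcases Finset.mem_insert.1 (hB ▸ ha) with rfl | haG
    · exact hofb
    · set f : {x : ℕ // x ∈ G.blacks} → PresentedGroup (G'.relsL ord) :=
        fun x => PresentedGroup.of ⟨x.1, by rw [hB]; exact Finset.mem_insert_of_mem x.2⟩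
        with hf
      set ordG : ℕ → List ℕ :=
        Function.update ord w ((ord w₀).erase f₀ ++ (ord w₁).erase f₁) with hordG
      have hmemG : ∀ v ∈ G.whites, ∀ e, e ∈ ordG v ↔ e ∈ G.edges ∧ G.wEnd e = v := by
        intro v hv e
        by_cases hvw : v = w
        · subst hvw
          rw [hordG, Function.update_self, List.mem_append,
            List.Nodup.mem_erase_iff (hord.nodup hw₀mem'),
            List.Nodup.mem_erase_iff (hord.nodup hw₁mem'),
            hord.mem hw₀mem', hord.mem hw₁mem']
          constructor
          · rintro (⟨hne, heE, heW⟩ | ⟨hne, heE, heW⟩)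
            · rcases hedge'.1 heE with rfl | rfl | rfl | he
              · exact absurd rfl hne
              · rw [hwf₁] at heW; exact absurd heW.symm hw₀w₁
              · rw [hwf₂] at heW; exact absurd heW.symm hw₀w₂
              · exact ⟨he, ((hwend₀ e he).1 heW).1⟩
            · rcases hedge'.1 heE with rfl | rfl | rfl | he
              · rw [hwf₀] at heW; exact absurd heW hw₀w₁
              · exact absurd rfl hne
              · rw [hwf₂] at heW; exact absurd heW.symm hw₁w₂
              · exact ⟨he, ((hwend₁ e he).1 heW).1⟩
          · rintro ⟨he, heW⟩
            by_cases h2 : e ∈ E₀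
            · exact Or.inl ⟨fun h => hf₀E (h ▸ he),
                hedge'.2 (Or.inr (Or.inr (Or.inr he))), (hwend₀ e he).2 ⟨heW, h2⟩⟩
            · exact Or.inr ⟨fun h => hf₁E (h ▸ he),
                hedge'.2 (Or.inr (Or.inr (Or.inr he))), (hwend₁ e he).2 ⟨heW, h2⟩⟩
        · rw [hordG, Function.update_of_ne hvw, hord.mem (hvmem' hv hvw)]
          constructor
          · rintro ⟨heE, heW⟩
            rcases hedge'.1 heE with rfl | rfl | rfl | he
            · rw [hwf₀] at heW; exact absurd (hWmem (heW ▸ hv)) hw₀V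
            · rw [hwf₁] at heW; exact absurd (hWmem (heW ▸ hv)) hw₁V
            · rw [hwf₂] at heW; exact absurd (hWmem (heW ▸ hv)) hw₂V
            · exact ⟨he, (hwendv hv hvw e he).1 heW⟩
          · rintro ⟨he, heW⟩
            exact ⟨hedge'.2 (Or.inr (Or.inr (Or.inr he))),
              (hwendv hv hvw e he).2 heW⟩
      have hndG : ∀ v ∈ G.whites, (ordG v).Nodup := by
        intro v hv
        by_cases hvw : v = w
        · subst hvw
          rw [hordG, Function.update_self]
          refine List.Nodup.append ((hord.nodup hw₀mem').erase _)
            ((hord.nodup hw₁mem').erase _) ?_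
          intro e he₀ he₁
          have h₀ := ((hord.mem hw₀mem').1 (List.mem_of_mem_erase he₀)).2
          have h₁ := ((hord.mem hw₁mem').1 (List.mem_of_mem_erase he₁)).2
          exact hw₀w₁ (h₀.symm.trans h₁)
        · rw [hordG, Function.update_of_ne hvw]; exact hord.nodup (hvmem' hv hvw)
      have hterm : ∀ e ∈ G.edges,
          (if h : G.bEnd e ∈ G.blacks then
            (FreeGroup.lift f) (FreeGroup.of ⟨G.bEnd e, h⟩) ^ G.label e else 1) =
          G'.gterm ord e := by
        intro e he
        have h2 : G.bEnd e ∈ G'.blacks := by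
          rw [hB]; exact Finset.mem_insert_of_mem (G.bEnd_mem e he)
        rw [lift_term_eq f rfl (G.bEnd_mem e he), gterm_eq' G' ord (holdB e he).1 h2,
          (holdB e he).2]
      have hkill : ∀ r ∈ G.relsL ordG, (FreeGroup.lift f) r = 1 := by
        rintro r ⟨v, hv, rfl⟩
        rw [hom_relatorL (FreeGroup.lift f) (ordG v),
          List.map_congr_left (fun e he => hterm e ((hmemG v hv e).1 he).1)]
        by_cases hvw : v = w
        · subst hvw
          rw [hordG, Function.update_self, List.map_append, List.prod_append,
            prod_map_erase_one _ f₀ hgf₀, prod_map_erase_one _ f₁ hgf₁,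
            gterm_prod G' ord hw₀mem', gterm_prod G' ord hw₁mem', one_mul]
        · rw [hordG, Function.update_of_ne hvw]
          exact gterm_prod G' ord (hvmem' hv hvw)
      have h3 := ih ordG (enum_of_mem hndG hmemG) (PresentedGroup.of ⟨a, haG⟩)
      calc (PresentedGroup.of ⟨a, ha⟩ : PresentedGroup (G'.relsL ord))
          = PresentedGroup.toGroup hkill (PresentedGroup.of ⟨a, haG⟩) := by
            rw [PresentedGroup.toGroup.of]
        _ = 1 := by rw [h3, map_one]
  | o2 G G' w hG hop ih =>
    intro ord hord
    obtain ⟨hw, b, w', f₁, f₂, hbV, hw'V, hbw', hf₁E, hf₂E, hf₁f₂, hB, hW, hE,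
      hold, hbf₁, hwf₁, hlf₁, hbf₂, hwf₂, hlf₂, hgold, hgw'⟩ := hop
    have hWmem : ∀ {v}, v ∈ G.whites → v ∈ G.Verts := fun hv => Finset.mem_union_right _ hv
    have hw'w : w' ≠ w := fun h => hw'V (by rw [h]; exact hWmem hw)
    have hw'nw : w' ∉ G.whites := fun h => hw'V (hWmem h)
    have hbmem' : b ∈ G'.blacks := by rw [hB]; exact Finset.mem_insert_self _ _
    have hw'mem' : w' ∈ G'.whites := by rw [hW]; exact Finset.mem_insert_self _ _
    have hvmem' : ∀ {v}, v ∈ G.whites → v ∈ G'.whites := fun hv => by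
      rw [hW]; exact Finset.mem_insert_of_mem hv
    have hedge' : ∀ {e}, e ∈ G'.edges ↔ e = f₁ ∨ e = f₂ ∨ e ∈ G.edges := fun {e} => by
      rw [hE]; simp
    have hw'list : ord w' = [f₂] := by
      refine Multiset.coe_eq_singleton.1 ?_
      rw [Multiset.Nodup.ext (Multiset.coe_nodup.2 (hord.nodup hw'mem'))
        (Multiset.nodup_singleton f₂)]
      intro e
      rw [Multiset.mem_coe, hord.mem hw'mem', Multiset.mem_singleton]
      constructor
      · rintro ⟨heE, heW⟩
        rcases hedge'.1 heE with rfl | rfl | he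
        · rw [hwf₁] at heW; exact absurd heW.symm hw'w
        · rfl
        · rw [(hold e he).2.1] at heW
          exact absurd (heW ▸ G.wEnd_mem e he) hw'nw
      · rintro rfl
        exact ⟨hedge'.2 (Or.inr (Or.inl rfl)), hwf₂⟩
    have hofb : (PresentedGroup.of ⟨b, hbmem'⟩ : PresentedGroup (G'.relsL ord)) = 1 := by
      have h1 := gterm_prod G' ord hw'mem'
      rw [hw'list, List.map_cons, List.map_nil, List.prod_cons, List.prod_nil, mul_one,
        gterm_eq' G' ord hbf₂ hbmem', hlf₂, pow_one] at h1
      exact h1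
    have hgf₁ : G'.gterm ord f₁ = 1 := by
      rw [gterm_eq' G' ord hbf₁ hbmem', hlf₁, hofb, one_pow]
    refine presented_eq_one ?_
    rintro ⟨a, ha⟩
    rcases Finset.mem_insert.1 (hB ▸ ha) with rfl | haG
    · exact hofb
    · set f : {x : ℕ // x ∈ G.blacks} → PresentedGroup (G'.relsL ord) :=
        fun x => PresentedGroup.of ⟨x.1, by rw [hB]; exact Finset.mem_insert_of_mem x.2⟩
        with hf
      set ordG : ℕ → List ℕ := Function.update ord w ((ord w).erase f₁) with hordG
      have hmemG : ∀ v ∈ G.whites, ∀ e, e ∈ ordG v ↔ e ∈ G.edges ∧ G.wEnd e = v := by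
        intro v hv e
        by_cases hvw : v = w
        · subst hvw
          rw [hordG, Function.update_self,
            List.Nodup.mem_erase_iff (hord.nodup (hvmem' hv)), hord.mem (hvmem' hv)]
          constructor
          · rintro ⟨hne, heE, heW⟩
            rcases hedge'.1 heE with rfl | rfl | he
            · exact absurd rfl hne
            · rw [hwf₂] at heW; exact absurd heW hw'w
            · exact ⟨he, by rw [← (hold e he).2.1]; exact heW⟩
          · rintro ⟨he, heW⟩
            exact ⟨fun h => hf₁E (h ▸ he), hedge'.2 (Or.inr (Or.inr he)),
              by rw [(hold e he).2.1]; exact heW⟩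
        · rw [hordG, Function.update_of_ne hvw, hord.mem (hvmem' hv)]
          constructor
          · rintro ⟨heE, heW⟩
            rcases hedge'.1 heE with rfl | rfl | he
            · rw [hwf₁] at heW; exact absurd heW.symm hvw
            · rw [hwf₂] at heW; exact absurd (by rw [heW]; exact hv) hw'nw
            · exact ⟨he, by rw [← (hold e he).2.1]; exact heW⟩
          · rintro ⟨he, heW⟩
            exact ⟨hedge'.2 (Or.inr (Or.inr he)),
              by rw [(hold e he).2.1]; exact heW⟩
      have hndG : ∀ v ∈ G.whites, (ordG v).Nodup := by
        intro v hv
        by_cases hvw : v = w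
        · subst hvw; rw [hordG, Function.update_self]
          exact (hord.nodup (hvmem' hv)).erase _
        · rw [hordG, Function.update_of_ne hvw]; exact hord.nodup (hvmem' hv)
      have hterm : ∀ e ∈ G.edges,
          (if h : G.bEnd e ∈ G.blacks then
            (FreeGroup.lift f) (FreeGroup.of ⟨G.bEnd e, h⟩) ^ G.label e else 1) =
          G'.gterm ord e := by
        intro e he
        have h2 : G.bEnd e ∈ G'.blacks := by
          rw [hB]; exact Finset.mem_insert_of_mem (G.bEnd_mem e he)
        rw [lift_term_eq f rfl (G.bEnd_mem e he), gterm_eq' G' ord (hold e he).1 h2,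
          (hold e he).2.2]
      have hkill : ∀ r ∈ G.relsL ordG, (FreeGroup.lift f) r = 1 := by
        rintro r ⟨v, hv, rfl⟩
        rw [hom_relatorL (FreeGroup.lift f) (ordG v),
          List.map_congr_left (fun e he => hterm e ((hmemG v hv e).1 he).1)]
        by_cases hvw : v = w
        · subst hvw
          rw [hordG, Function.update_self, prod_map_erase_one _ _ hgf₁]
          exact gterm_prod G' ord (hvmem' hv)
        · rw [hordG, Function.update_of_ne hvw]
          exact gterm_prod G' ord (hvmem' hv)
      have h3 := ih ordG (enum_of_mem hndG hmemG) (PresentedGroup.of ⟨a, haG⟩)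
      calc (PresentedGroup.of ⟨a, ha⟩ : PresentedGroup (G'.relsL ord))
          = PresentedGroup.toGroup hkill (PresentedGroup.of ⟨a, haG⟩) := by
            rw [PresentedGroup.toGroup.of]
        _ = 1 := by rw [h3, map_one]
  | o1star G₁ G₂ G' w₁ w₂ h1 h2 hop ih1 ih2 =>
    intro ord hord
    obtain ⟨⟨hdV, hdE⟩, hw₁, hw₂, b, w, f₀, f₁, f₂, hbV, hwV, hbw, hf₀E, hf₁E, hf₂E,
      hf₀₁, hf₀₂, hf₁₂, hB, hW, hE, hold₁, hold₂, hbf₀, hwf₀, hlf₀,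
      hbf₁, hwf₁, hlf₁, hbf₂, hwf₂, hlf₂, hg₁, hg₂, hgw⟩ := hop
    have hWmem₁ : ∀ {v}, v ∈ G₁.whites → v ∈ G₁.Verts := fun hv => Finset.mem_union_right _ hv
    have hWmem₂ : ∀ {v}, v ∈ G₂.whites → v ∈ G₂.Verts := fun hv => Finset.mem_union_right _ hv
    have hno₂ : ∀ {v}, v ∈ G₁.whites → v ∉ G₂.Verts := fun hv =>
      Finset.disjoint_left.1 hdV (hWmem₁ hv)
    have hno₁ : ∀ {v}, v ∈ G₂.whites → v ∉ G₁.Verts := fun hv =>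
      Finset.disjoint_right.1 hdV (hWmem₂ hv)
    have hwV₁ : w ∉ G₁.Verts := fun h => hwV (Finset.mem_union_left _ h)
    have hwV₂ : w ∉ G₂.Verts := fun h => hwV (Finset.mem_union_right _ h)
    have hbmem' : b ∈ G'.blacks := by rw [hB]; exact Finset.mem_insert_self _ _
    have hwmem' : w ∈ G'.whites := by rw [hW]; exact Finset.mem_insert_self _ _
    have hvmem'₁ : ∀ {v}, v ∈ G₁.whites → v ∈ G'.whites := fun hv => by
      rw [hW]; exact Finset.mem_insert_of_mem (Finset.mem_union_left _ hv)
    have hvmem'₂ : ∀ {v}, v ∈ G₂.whites → v ∈ G'.whites := fun hv => by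
      rw [hW]; exact Finset.mem_insert_of_mem (Finset.mem_union_right _ hv)
    have hedge' : ∀ {e}, e ∈ G'.edges ↔
        e = f₀ ∨ e = f₁ ∨ e = f₂ ∨ e ∈ G₁.edges ∨ e ∈ G₂.edges := fun {e} => by
      rw [hE]; simp [Finset.mem_union, or_assoc]
    have hwlist : ord w = [f₂] := by
      refine Multiset.coe_eq_singleton.1 ?_
      rw [Multiset.Nodup.ext (Multiset.coe_nodup.2 (hord.nodup hwmem'))
        (Multiset.nodup_singleton f₂)]
      intro e
      rw [Multiset.mem_coe, hord.mem hwmem', Multiset.mem_singleton]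
      constructor
      · rintro ⟨heE, heW⟩
        rcases hedge'.1 heE with rfl | rfl | rfl | he | he
        · rw [hwf₀] at heW; exact absurd (hWmem₁ (heW ▸ hw₁)) hwV₁
        · rw [hwf₁] at heW; exact absurd (hWmem₂ (heW ▸ hw₂)) hwV₂
        · rfl
        · rw [(hold₁ e he).2.1] at heW
          exact absurd (hWmem₁ (heW ▸ G₁.wEnd_mem e he)) hwV₁
        · rw [(hold₂ e he).2.1] at heW
          exact absurd (hWmem₂ (heW ▸ G₂.wEnd_mem e he)) hwV₂
      · rintro rfl
        exact ⟨hedge'.2 (Or.inr (Or.inr (Or.inl rfl))), hwf₂⟩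
    have hofb : (PresentedGroup.of ⟨b, hbmem'⟩ : PresentedGroup (G'.relsL ord)) = 1 := by
      have hh := gterm_prod G' ord hwmem'
      rw [hwlist, List.map_cons, List.map_nil, List.prod_cons, List.prod_nil, mul_one,
        gterm_eq' G' ord hbf₂ hbmem', hlf₂, pow_one] at hh
      exact hh
    have hgf₀ : G'.gterm ord f₀ = 1 := by
      rw [gterm_eq' G' ord hbf₀ hbmem', hlf₀, hofb, one_pow]
    have hgf₁ : G'.gterm ord f₁ = 1 := by
      rw [gterm_eq' G' ord hbf₁ hbmem', hlf₁, hofb, one_pow]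
    refine presented_eq_one ?_
    rintro ⟨a, ha⟩
    rcases Finset.mem_insert.1 (hB ▸ ha) with rfl | haU
    · exact hofb
    · rcases Finset.mem_union.1 haU with haG | haG
      · set f : {x : ℕ // x ∈ G₁.blacks} → PresentedGroup (G'.relsL ord) :=
          fun x => PresentedGroup.of ⟨x.1, by
            rw [hB]; exact Finset.mem_insert_of_mem (Finset.mem_union_left _ x.2)⟩
          with hf
        set ordG : ℕ → List ℕ := Function.update ord w₁ ((ord w₁).erase f₀) with hordG
        have hmemG : ∀ v ∈ G₁.whites, ∀ e, e ∈ ordG v ↔ e ∈ G₁.edges ∧ G₁.wEnd e = v := by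
          intro v hv e
          by_cases hvw : v = w₁
          · subst hvw
            rw [hordG, Function.update_self,
              List.Nodup.mem_erase_iff (hord.nodup (hvmem'₁ hv)), hord.mem (hvmem'₁ hv)]
            constructor
            · rintro ⟨hne, heE, heW⟩
              rcases hedge'.1 heE with rfl | rfl | rfl | he | he
              · exact absurd rfl hne
              · rw [hwf₁] at heW; exact absurd (hWmem₁ (heW ▸ hv)) (hno₁ hw₂)
              · rw [hwf₂] at heW; exact absurd (hWmem₁ (heW ▸ hv)) hwV₁
              · exact ⟨he, by rw [← (hold₁ e he).2.1]; exact heW⟩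
              · rw [(hold₂ e he).2.1] at heW
                exact absurd (hWmem₂ (G₂.wEnd_mem e he)) (heW ▸ hno₂ hv)
            · rintro ⟨he, heW⟩
              exact ⟨fun h => hf₀E (h ▸ Finset.mem_union_left _ he),
                hedge'.2 (Or.inr (Or.inr (Or.inr (Or.inl he)))),
                by rw [(hold₁ e he).2.1]; exact heW⟩
          · rw [hordG, Function.update_of_ne hvw, hord.mem (hvmem'₁ hv)]
            constructor
            · rintro ⟨heE, heW⟩
              rcases hedge'.1 heE with rfl | rfl | rfl | he | he
              · rw [hwf₀] at heW; exact absurd heW.symm hvw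
              · rw [hwf₁] at heW; exact absurd (hWmem₁ (heW ▸ hv)) (hno₁ hw₂)
              · rw [hwf₂] at heW; exact absurd (hWmem₁ (heW ▸ hv)) hwV₁
              · exact ⟨he, by rw [← (hold₁ e he).2.1]; exact heW⟩
              · rw [(hold₂ e he).2.1] at heW
                exact absurd (hWmem₂ (G₂.wEnd_mem e he)) (heW ▸ hno₂ hv)
            · rintro ⟨he, heW⟩
              exact ⟨hedge'.2 (Or.inr (Or.inr (Or.inr (Or.inl he)))),
                by rw [(hold₁ e he).2.1]; exact heW⟩
        have hndG : ∀ v ∈ G₁.whites, (ordG v).Nodup := by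
          intro v hv
          by_cases hvw : v = w₁
          · subst hvw; rw [hordG, Function.update_self]
            exact (hord.nodup (hvmem'₁ hv)).erase _
          · rw [hordG, Function.update_of_ne hvw]; exact hord.nodup (hvmem'₁ hv)
        have hterm : ∀ e ∈ G₁.edges,
            (if h : G₁.bEnd e ∈ G₁.blacks then
              (FreeGroup.lift f) (FreeGroup.of ⟨G₁.bEnd e, h⟩) ^ G₁.label e else 1) =
            G'.gterm ord e := by
          intro e he
          have hh2 : G₁.bEnd e ∈ G'.blacks := by
            rw [hB]
            exact Finset.mem_insert_of_mem (Finset.mem_union_left _ (G₁.bEnd_mem e he))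
          rw [lift_term_eq f rfl (G₁.bEnd_mem e he), gterm_eq' G' ord (hold₁ e he).1 hh2,
            (hold₁ e he).2.2]
        have hkill : ∀ r ∈ G₁.relsL ordG, (FreeGroup.lift f) r = 1 := by
          rintro r ⟨v, hv, rfl⟩
          rw [hom_relatorL (FreeGroup.lift f) (ordG v),
            List.map_congr_left (fun e he => hterm e ((hmemG v hv e).1 he).1)]
          by_cases hvw : v = w₁
          · subst hvw
            rw [hordG, Function.update_self, prod_map_erase_one _ f₀ hgf₀]
            exact gterm_prod G' ord (hvmem'₁ hv)
          · rw [hordG, Function.update_of_ne hvw]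
            exact gterm_prod G' ord (hvmem'₁ hv)
        have h3 := ih1 ordG (enum_of_mem hndG hmemG) (PresentedGroup.of ⟨a, haG⟩)
        calc (PresentedGroup.of ⟨a, ha⟩ : PresentedGroup (G'.relsL ord))
            = PresentedGroup.toGroup hkill (PresentedGroup.of ⟨a, haG⟩) := by
              rw [PresentedGroup.toGroup.of]
          _ = 1 := by rw [h3, map_one]
      · set f : {x : ℕ // x ∈ G₂.blacks} → PresentedGroup (G'.relsL ord) :=
          fun x => PresentedGroup.of ⟨x.1, by
            rw [hB]; exact Finset.mem_insert_of_mem (Finset.mem_union_right _ x.2)⟩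
          with hf
        set ordG : ℕ → List ℕ := Function.update ord w₂ ((ord w₂).erase f₁) with hordG
        have hmemG : ∀ v ∈ G₂.whites, ∀ e, e ∈ ordG v ↔ e ∈ G₂.edges ∧ G₂.wEnd e = v := by
          intro v hv e
          by_cases hvw : v = w₂
          · subst hvw
            rw [hordG, Function.update_self,
              List.Nodup.mem_erase_iff (hord.nodup (hvmem'₂ hv)), hord.mem (hvmem'₂ hv)]
            constructor
            · rintro ⟨hne, heE, heW⟩
              rcases hedge'.1 heE with rfl | rfl | rfl | he | he
              · rw [hwf₀] at heW; exact absurd (hWmem₂ (heW ▸ hv)) (hno₂ hw₁)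
              · exact absurd rfl hne
              · rw [hwf₂] at heW; exact absurd (hWmem₂ (heW ▸ hv)) hwV₂
              · rw [(hold₁ e he).2.1] at heW
                exact absurd (hWmem₁ (G₁.wEnd_mem e he)) (heW ▸ hno₁ hv)
              · exact ⟨he, by rw [← (hold₂ e he).2.1]; exact heW⟩
            · rintro ⟨he, heW⟩
              exact ⟨fun h => hf₁E (h ▸ Finset.mem_union_right _ he),
                hedge'.2 (Or.inr (Or.inr (Or.inr (Or.inr he)))),
                by rw [(hold₂ e he).2.1]; exact heW⟩
          · rw [hordG, Function.update_of_ne hvw, hord.mem (hvmem'₂ hv)]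
            constructor
            · rintro ⟨heE, heW⟩
              rcases hedge'.1 heE with rfl | rfl | rfl | he | he
              · rw [hwf₀] at heW; exact absurd (hWmem₂ (heW ▸ hv)) (hno₂ hw₁)
              · rw [hwf₁] at heW; exact absurd heW.symm hvw
              · rw [hwf₂] at heW; exact absurd (hWmem₂ (heW ▸ hv)) hwV₂
              · rw [(hold₁ e he).2.1] at heW
                exact absurd (hWmem₁ (G₁.wEnd_mem e he)) (heW ▸ hno₁ hv)
              · exact ⟨he, by rw [← (hold₂ e he).2.1]; exact heW⟩
            · rintro ⟨he, heW⟩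
              exact ⟨hedge'.2 (Or.inr (Or.inr (Or.inr (Or.inr he)))),
                by rw [(hold₂ e he).2.1]; exact heW⟩
        have hndG : ∀ v ∈ G₂.whites, (ordG v).Nodup := by
          intro v hv
          by_cases hvw : v = w₂
          · subst hvw; rw [hordG, Function.update_self]
            exact (hord.nodup (hvmem'₂ hv)).erase _
          · rw [hordG, Function.update_of_ne hvw]; exact hord.nodup (hvmem'₂ hv)
        have hterm : ∀ e ∈ G₂.edges,
            (if h : G₂.bEnd e ∈ G₂.blacks then
              (FreeGroup.lift f) (FreeGroup.of ⟨G₂.bEnd e, h⟩) ^ G₂.label e else 1) =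
            G'.gterm ord e := by
          intro e he
          have hh2 : G₂.bEnd e ∈ G'.blacks := by
            rw [hB]
            exact Finset.mem_insert_of_mem (Finset.mem_union_right _ (G₂.bEnd_mem e he))
          rw [lift_term_eq f rfl (G₂.bEnd_mem e he), gterm_eq' G' ord (hold₂ e he).1 hh2,
            (hold₂ e he).2.2]
        have hkill : ∀ r ∈ G₂.relsL ordG, (FreeGroup.lift f) r = 1 := by
          rintro r ⟨v, hv, rfl⟩
          rw [hom_relatorL (FreeGroup.lift f) (ordG v),
            List.map_congr_left (fun e he => hterm e ((hmemG v hv e).1 he).1)]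
          by_cases hvw : v = w₂
          · subst hvw
            rw [hordG, Function.update_self, prod_map_erase_one _ f₁ hgf₁]
            exact gterm_prod G' ord (hvmem'₂ hv)
          · rw [hordG, Function.update_of_ne hvw]
            exact gterm_prod G' ord (hvmem'₂ hv)
        have h3 := ih2 ordG (enum_of_mem hndG hmemG) (PresentedGroup.of ⟨a, haG⟩)
        calc (PresentedGroup.of ⟨a, ha⟩ : PresentedGroup (G'.relsL ord))
            = PresentedGroup.toGroup hkill (PresentedGroup.of ⟨a, haG⟩) := by
              rw [PresentedGroup.toGroup.of]
          _ = 1 := by rw [h3, map_one]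

/-- Every labeled graph belonging to the class `𝒢` has trivial associated group. -/
theorem mem_G_trivial_group (Γ : LGraph) (h : InG Γ) :
    ∀ x : Γ.Grp, x = 1 :=
  key Γ h _ (enum_sort Γ)
end

section
/- Let Γ be a trivalent labeled graph that is a tree with at least one black vertex, all white vertices of genus 0, and all terminal vertices white, and suppose the associated group G(Γ) is trivial. Then Γ contains a terminal vertex whose incident edge has label 1. -/
open Stratifold Stratifold.LGraph


section AuxForMain

open Finset

lemma Stratifold.LGraph.incident_black (Γ : LGraph) {b : ℕ} (hb : b ∈ Γ.blacks) :
    Γ.IncidentEdges b = Γ.edges.filter fun e => Γ.bEnd e = b := by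
  unfold Stratifold.LGraph.IncidentEdges
  refine Finset.filter_congr fun e he => ?_
  constructor
  · rintro (h | h)
    · exact h
    · exact absurd (h ▸ Γ.wEnd_mem e he) (Finset.disjoint_left.mp Γ.disj hb)
  · exact Or.inl

lemma Stratifold.LGraph.incident_white (Γ : LGraph) {w : ℕ} (hw : w ∈ Γ.whites) :
    Γ.IncidentEdges w = Γ.edges.filter fun e => Γ.wEnd e = w := by
  unfold Stratifold.LGraph.IncidentEdges
  refine Finset.filter_congr fun e he => ?_
  constructor
  · rintro (h | h)
    · exact absurd hw (Finset.disjoint_left.mp Γ.disj (h ▸ Γ.bEnd_mem e he))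
    · exact h
  · exact Or.inr

end AuxForMain

/-- Let `Γ` be a trivalent labeled graph which is a tree with at least one black vertex,
all white vertices of genus `0`, and all terminal vertices white, whose associated group
`G(Γ)` is trivial.  Then `Γ` contains a terminal vertex whose incident edge has
label `1`. -/


theorem exists_terminal_label_one (Γ : LGraph) (hBlack : Γ.blacks.Nonempty)
    (hTri : Γ.Trivalent) (hTree : Γ.IsTree) (hGenus : Γ.WhitesGenusZero)
    (hTerm : Γ.TerminalsWhite) (hTriv : ∀ x : Γ.Grp, x = 1) :
    ∃ v ∈ Γ.Verts, Γ.deg v = 1 ∧ ∃ e ∈ Γ.IncidentEdges v, Γ.label e = 1 := by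
  classical
  by_contra hC
  push_neg at hC
  -- hC : every degree-1 vertex has all incident labels ≠ 1
  obtain ⟨b₁, hb₁⟩ := hBlack
  -- black vertices have degree 2 or 3
  have hdegb : ∀ b ∈ Γ.blacks, Γ.deg b = 2 ∨ Γ.deg b = 3 := by
    intro b hb
    have hsum := hTri b hb
    have hsub : Γ.IncidentEdges b ⊆ Γ.edges := Finset.filter_subset _ _
    have h1 : Γ.deg b ≤ 3 := by
      calc Γ.deg b = ∑ _e ∈ Γ.IncidentEdges b, 1 := by simp [LGraph.deg]
      _ ≤ ∑ e ∈ Γ.IncidentEdges b, Γ.label e :=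
        Finset.sum_le_sum (fun e he => Γ.label_pos e (hsub he))
      _ = 3 := hsum
    have h2 : Γ.deg b ≠ 0 := by
      intro h0
      rw [LGraph.deg, Finset.card_eq_zero] at h0
      rw [h0] at hsum
      simp at hsum
    have := hTerm b hb
    omega
  -- every label is 1 or 2
  have hlab : ∀ e ∈ Γ.edges, Γ.label e = 1 ∨ Γ.label e = 2 := by
    intro e he
    have hb := Γ.bEnd_mem e he
    have hsum := hTri _ hb
    have heInc : e ∈ Γ.IncidentEdges (Γ.bEnd e) :=
      Finset.mem_filter.mpr ⟨he, Or.inl rfl⟩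
    have hrest : Γ.deg (Γ.bEnd e) - 1 ≤
        ∑ e' ∈ (Γ.IncidentEdges (Γ.bEnd e)).erase e, Γ.label e' := by
      have hone : ∀ e' ∈ (Γ.IncidentEdges (Γ.bEnd e)).erase e, 1 ≤ Γ.label e' := fun e' he' =>
        Γ.label_pos e' (Finset.filter_subset _ _ (Finset.mem_of_mem_erase he'))
      calc Γ.deg (Γ.bEnd e) - 1 = ∑ _e' ∈ (Γ.IncidentEdges (Γ.bEnd e)).erase e, 1 := by
            simp [LGraph.deg, Finset.card_erase_of_mem heInc]
        _ ≤ _ := Finset.sum_le_sum hone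
    have hsplit : Γ.label e + ∑ e' ∈ (Γ.IncidentEdges (Γ.bEnd e)).erase e, Γ.label e' = 3 := by
      rw [Finset.add_sum_erase _ _ heInc]; exact hsum
    have := hdegb _ hb
    have := Γ.label_pos e he
    omega
  -- edge count via black ends
  have hE_b : Γ.edges.card = ∑ b ∈ Γ.blacks, Γ.deg b := by
    rw [Finset.card_eq_sum_card_fiberwise (fun e he => Γ.bEnd_mem e he)]
    exact Finset.sum_congr rfl fun b hb => by simp [LGraph.deg, Γ.incident_black hb]
  set k := (Γ.blacks.filter fun b => Γ.deg b = 3).card with hk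
  have hk_le : k ≤ Γ.blacks.card := Finset.card_filter_le _ _
  have hkk := Finset.card_filter_add_card_filter_not
    (s := Γ.blacks) (fun b => Γ.deg b = 3)
  have hsum_deg : ∑ b ∈ Γ.blacks, Γ.deg b = 2 * Γ.blacks.card + k := by
    rw [← Finset.sum_filter_add_sum_filter_not Γ.blacks (fun b => Γ.deg b = 3)]
    have h3 : ∑ b ∈ Γ.blacks.filter (fun b => Γ.deg b = 3), Γ.deg b = 3 * k := by
      rw [Finset.sum_congr rfl (fun b hb => (Finset.mem_filter.mp hb).2), Finset.sum_const,
        smul_eq_mul, hk, mul_comm]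
    have hdeg2 : ∀ b ∈ Γ.blacks.filter (fun b => ¬ Γ.deg b = 3), Γ.deg b = 2 := by
      intro b hb
      have hb' := Finset.mem_filter.mp hb
      rcases hdegb b hb'.1 with h | h
      · exact h
      · exact absurd h hb'.2
    have h2 : ∑ b ∈ Γ.blacks.filter (fun b => ¬ Γ.deg b = 3), Γ.deg b =
        2 * (Γ.blacks.filter fun b => ¬ Γ.deg b = 3).card := by
      rw [Finset.sum_congr rfl hdeg2, Finset.sum_const, smul_eq_mul, mul_comm]
    rw [h3, h2]
    omega
  -- whites have positive degree
  have hdegw_pos : ∀ w ∈ Γ.whites, 1 ≤ Γ.deg w := by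
    intro w hw
    have hwV : w ∈ Γ.Verts := Finset.mem_union_right _ hw
    have hbV : b₁ ∈ Γ.Verts := Finset.mem_union_left _ hb₁
    have hne : w ≠ b₁ := by
      intro h
      exact absurd hw (Finset.disjoint_left.mp Γ.disj (h ▸ hb₁))
    have hr := hTree.1.2 w hwV b₁ hbV
    rcases Relation.ReflTransGen.cases_head hr with heq | ⟨c, hadj, _⟩
    · exact absurd heq hne
    · obtain ⟨e, he, hcase⟩ := hadj
      have hmem : e ∈ Γ.IncidentEdges w := by
        rcases hcase with ⟨h1, _⟩ | ⟨_, h2⟩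
        · exact Finset.mem_filter.mpr ⟨he, Or.inl h1⟩
        · exact Finset.mem_filter.mpr ⟨he, Or.inr h2⟩
      exact Finset.card_pos.mpr ⟨e, hmem⟩
  -- edge count via white ends
  have hE_w : Γ.edges.card = ∑ w ∈ Γ.whites, Γ.deg w := by
    rw [Finset.card_eq_sum_card_fiberwise (fun e he => Γ.wEnd_mem e he)]
    exact Finset.sum_congr rfl fun w hw => by simp [LGraph.deg, Γ.incident_white hw]
  set t := (Γ.whites.filter fun w => Γ.deg w = 1).card with ht
  have htt := Finset.card_filter_add_card_filter_not
    (s := Γ.whites) (fun w => Γ.deg w = 1)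
  have hW_lb : t + 2 * (Γ.whites.filter fun w => ¬ Γ.deg w = 1).card ≤
      ∑ w ∈ Γ.whites, Γ.deg w := by
    rw [← Finset.sum_filter_add_sum_filter_not Γ.whites (fun w => Γ.deg w = 1)]
    have h1 : ∑ w ∈ Γ.whites.filter (fun w => Γ.deg w = 1), Γ.deg w = t := by
      rw [Finset.sum_congr rfl (fun w hw => (Finset.mem_filter.mp hw).2), Finset.sum_const,
        smul_eq_mul, mul_one, ht]
    have h2 : 2 * (Γ.whites.filter fun w => ¬ Γ.deg w = 1).card ≤
        ∑ w ∈ Γ.whites.filter (fun w => ¬ Γ.deg w = 1), Γ.deg w := by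
      calc 2 * (Γ.whites.filter fun w => ¬ Γ.deg w = 1).card
          = ∑ _w ∈ Γ.whites.filter (fun w => ¬ Γ.deg w = 1), 2 := by
            rw [Finset.sum_const, smul_eq_mul, mul_comm]
        _ ≤ _ := Finset.sum_le_sum (fun w hw => by
            have hw' := Finset.mem_filter.mp hw
            have := hdegw_pos w hw'.1
            omega)
    omega
  have hVcard : Γ.Verts.card = Γ.blacks.card + Γ.whites.card :=
    Finset.card_union_of_disjoint Γ.disj
  have htree := hTree.2
  have hBpos : 1 ≤ Γ.blacks.card := Finset.card_pos.mpr ⟨b₁, hb₁⟩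
  have hNTcard : (Γ.whites.filter fun w => ¬ Γ.deg w = 1).card + 1 ≤ Γ.blacks.card := by
    rw [hVcard] at htree
    omega
  -- the mod-2 linear system
  set NT := Γ.whites.filter fun w => ¬ Γ.deg w = 1 with hNTdef
  set S1 : ℕ → Finset ℕ := fun w => Γ.edges.filter fun e => Γ.wEnd e = w ∧ Γ.label e = 1
    with hS1
  set row : ({b // b ∈ Γ.blacks} → ZMod 2) → ℕ → ZMod 2 := fun x w =>
    ∑ e ∈ S1 w, (if h : Γ.bEnd e ∈ Γ.blacks then x ⟨Γ.bEnd e, h⟩ else 0) with hrowdef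
  set T : ({b // b ∈ Γ.blacks} → ZMod 2) → ({w // w ∈ NT} → ZMod 2) := fun x w => row x w.1
    with hT
  have hcard : Fintype.card ({w // w ∈ NT} → ZMod 2) <
      Fintype.card ({b // b ∈ Γ.blacks} → ZMod 2) := by
    rw [Fintype.card_fun, Fintype.card_fun, Fintype.card_coe, Fintype.card_coe]
    have : Fintype.card (ZMod 2) = 2 := rfl
    rw [this]
    exact Nat.pow_lt_pow_right one_lt_two (by omega)
  obtain ⟨x, y, hxy, hxyT⟩ := Fintype.exists_ne_map_eq_of_card_lt T hcard
  set z := x - y with hzdef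
  have hrow0 : ∀ w ∈ NT, row z w = 0 := by
    intro w hw
    have heq : row x w = row y w := congrFun hxyT ⟨w, hw⟩
    have hsub : row z w = row x w - row y w := by
      simp only [hrowdef, hzdef]
      rw [← Finset.sum_sub_distrib]
      refine Finset.sum_congr rfl fun e _ => ?_
      by_cases h : Γ.bEnd e ∈ Γ.blacks <;> simp [h]
    rw [hsub, heq, sub_self]
  obtain ⟨b₀, hb₀⟩ : ∃ b, z b ≠ 0 := by
    by_contra h
    push_neg at h
    apply hxy
    funext b
    have := h b
    rw [hzdef] at this
    simpa [sub_eq_zero] using this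
  -- the homomorphism to Z/2
  set f : {b // b ∈ Γ.blacks} → Multiplicative (ZMod 2) := fun b => Multiplicative.ofAdd (z b)
    with hf
  have hpow2 : ∀ u : Multiplicative (ZMod 2), u ^ 2 = 1 := by decide
  have hrel : ∀ r ∈ Γ.rels, FreeGroup.lift f r = 1 := by
    rintro r ⟨w, hw, rfl⟩
    rw [LGraph.relator, map_list_prod, List.map_map]
    set s := Γ.edges.filter fun e => Γ.wEnd e = w with hs
    have hperm := (Finset.sort_perm_toList (r := (· ≤ ·)) (s := s)).map
      ((FreeGroup.lift f) ∘ fun e =>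
        if h : Γ.bEnd e ∈ Γ.blacks then
          FreeGroup.of (⟨Γ.bEnd e, h⟩ : {b : ℕ // b ∈ Γ.blacks}) ^ Γ.label e
        else 1)
    rw [hperm.prod_eq, Finset.prod_map_toList]
    have hstep : ∀ e ∈ s,
        ((FreeGroup.lift f) ∘ fun e =>
          if h : Γ.bEnd e ∈ Γ.blacks then
            FreeGroup.of (⟨Γ.bEnd e, h⟩ : {b : ℕ // b ∈ Γ.blacks}) ^ Γ.label e
          else 1) e
        = (Multiplicative.ofAdd (if h : Γ.bEnd e ∈ Γ.blacks then z ⟨Γ.bEnd e, h⟩ else 0))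
            ^ Γ.label e := by
      intro e he
      have heE : e ∈ Γ.edges := (Finset.mem_filter.mp he).1
      have hb : Γ.bEnd e ∈ Γ.blacks := Γ.bEnd_mem e heE
      simp only [Function.comp_apply, dif_pos hb, map_pow, FreeGroup.lift_apply_of, hf]
    rw [Finset.prod_congr rfl hstep]
    rw [← Finset.prod_filter_mul_prod_filter_not s (fun e => Γ.label e = 1)]
    have hpart2 : ∏ e ∈ s.filter (fun e => ¬ Γ.label e = 1),
        (Multiplicative.ofAdd (if h : Γ.bEnd e ∈ Γ.blacks then z ⟨Γ.bEnd e, h⟩ else 0))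
          ^ Γ.label e = 1 := by
      refine Finset.prod_eq_one fun e he => ?_
      obtain ⟨he1, he2⟩ := Finset.mem_filter.mp he
      have heE : e ∈ Γ.edges := (Finset.mem_filter.mp he1).1
      have h2 : Γ.label e = 2 := by
        rcases hlab e heE with h | h
        · exact absurd h he2
        · exact h
      rw [h2]
      exact hpow2 _
    have hfilter : s.filter (fun e => Γ.label e = 1) = S1 w := by
      rw [hs, hS1, Finset.filter_filter]
    have hpart1 : ∏ e ∈ s.filter (fun e => Γ.label e = 1),
        (Multiplicative.ofAdd (if h : Γ.bEnd e ∈ Γ.blacks then z ⟨Γ.bEnd e, h⟩ else 0))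
          ^ Γ.label e = 1 := by
      have hone : ∀ e ∈ s.filter (fun e => Γ.label e = 1),
          (Multiplicative.ofAdd (if h : Γ.bEnd e ∈ Γ.blacks then z ⟨Γ.bEnd e, h⟩ else 0))
            ^ Γ.label e
          = Multiplicative.ofAdd (if h : Γ.bEnd e ∈ Γ.blacks then z ⟨Γ.bEnd e, h⟩ else 0) := by
        intro e he
        rw [(Finset.mem_filter.mp he).2, pow_one]
      rw [Finset.prod_congr rfl hone, hfilter, ← ofAdd_sum]
      have hrw : ∑ e ∈ S1 w, (if h : Γ.bEnd e ∈ Γ.blacks then z ⟨Γ.bEnd e, h⟩ else 0)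
          = row z w := rfl
      have hzero : row z w = 0 := by
        by_cases hd : Γ.deg w = 1
        · have hempty : S1 w = ∅ := by
            rw [Finset.eq_empty_iff_forall_notMem]
            intro e he
            obtain ⟨heE, hwE, hl1⟩ := Finset.mem_filter.mp he
            have hmemI : e ∈ Γ.IncidentEdges w :=
              Finset.mem_filter.mpr ⟨heE, Or.inr hwE⟩
            exact hC w (Finset.mem_union_right _ hw) hd e hmemI hl1
          simp only [hrowdef, hempty, Finset.sum_empty]
        · exact hrow0 w (Finset.mem_filter.mpr ⟨hw, hd⟩)
      rw [hrw, hzero, ofAdd_zero]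
    rw [hpart1, hpart2, one_mul]
  -- conclude
  have h1 : Γ.gen b₀.1 b₀.2 = 1 := hTriv _
  have h2 : (PresentedGroup.toGroup hrel) (Γ.gen b₀.1 b₀.2) = f b₀ := by
    rw [LGraph.gen]
    exact PresentedGroup.toGroup.of hrel
  rw [h1, map_one] at h2
  apply hb₀
  have : Multiplicative.ofAdd (z b₀) = Multiplicative.ofAdd (0 : ZMod 2) := by
    rw [ofAdd_zero]
    exact h2.symm
  exact Multiplicative.ofAdd.injective this
end
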